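/- Let n be a power of 2 and let f, g ∈ R[x] be polynomials of degree strictly less than n over a commutative ring R. Then f·g = Σ_{k=0}^{n−1} σ_k · S_{n−1−k} · ( (S_{n−1−k}·x^k) ⊙ (S̄_k·f) ⊙ (S̄_k·g) ). -/

import Mathlib

/-- The signed Thue–Morse sequence: `σ n = (-1)^(Hamming weight of n)`. -/
noncomputable def sgn (R : Type*) [CommRing R] (n : ℕ) : R := (-1) ^ (Nat.digits 2 n).sum

/-- The Sierpiński polynomial `S m = ∏_{j≥0} (1 + X^(2^j))^(d_j m)` where `d_j m` is the
`j`-th binary digit of `m`. -/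
noncomputable def Sier (R : Type*) [CommRing R] (m : ℕ) : Polynomial R :=
  ∏ j ∈ Finset.range (m + 1), if m.testBit j then 1 + Polynomial.X ^ (2 ^ j) else 1

/-- The signed Sierpiński polynomial `S̄ m = ∏_{j≥0} (1 - X^(2^j))^(d_j m)`. -/
noncomputable def SierBar (R : Type*) [CommRing R] (m : ℕ) : Polynomial R :=
  ∏ j ∈ Finset.range (m + 1), if m.testBit j then 1 - Polynomial.X ^ (2 ^ j) else 1

/-- Termwise (Hadamard) product of polynomials. -/
noncomputable def hadP {R : Type*} [CommRing R] (p q : Polynomial R) : Polynomial R :=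
  ∑ n ∈ p.support, Polynomial.C (p.coeff n * q.coeff n) * Polynomial.X ^ n

open Polynomial Finset

section Aux
variable {R : Type*} [CommRing R]

lemma hadP_coeff (p q : Polynomial R) (n : ℕ) :
    (hadP p q).coeff n = p.coeff n * q.coeff n := by
  unfold hadP
  rw [Polynomial.finset_sum_coeff]
  simp only [Polynomial.coeff_C_mul, Polynomial.coeff_X_pow, mul_ite, mul_one, mul_zero]
  rw [Finset.sum_ite_eq]
  split_ifs with h
  · rfl
  · rw [Polynomial.notMem_support_iff.mp h, zero_mul]

lemma hadP_add_left (A B C : Polynomial R) : hadP (A + B) C = hadP A C + hadP B C := by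
  ext n; simp [hadP_coeff, add_mul]

lemma hadP_add_right (A B C : Polynomial R) : hadP A (B + C) = hadP A B + hadP A C := by
  ext n; simp [hadP_coeff, mul_add]

lemma hadP_sub_right (A B C : Polynomial R) : hadP A (B - C) = hadP A B - hadP A C := by
  ext n; simp [hadP_coeff, mul_sub]

lemma hadP_neg_left (A B : Polynomial R) : hadP (-A) B = - hadP A B := by
  ext n; simp [hadP_coeff]

lemma hadP_C_mul_left (a : R) (A B : Polynomial R) :
    hadP (Polynomial.C a * A) B = Polynomial.C a * hadP A B := by
  ext n; simp [hadP_coeff, mul_assoc]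

lemma hadP_C_mul_right (a : R) (A B : Polynomial R) :
    hadP A (Polynomial.C a * B) = Polynomial.C a * hadP A B := by
  ext n; simp only [hadP_coeff, Polynomial.coeff_C_mul]; ring

lemma hadP_sum_left {ι : Type*} (s : Finset ι) (F : ι → Polynomial R) (B : Polynomial R) :
    hadP (∑ i ∈ s, F i) B = ∑ i ∈ s, hadP (F i) B := by
  ext n; simp [hadP_coeff, Polynomial.finset_sum_coeff, Finset.sum_mul]

lemma hadP_sum_right {ι : Type*} (s : Finset ι) (A : Polynomial R) (F : ι → Polynomial R) :
    hadP A (∑ i ∈ s, F i) = ∑ i ∈ s, hadP A (F i) := by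
  ext n; simp [hadP_coeff, Polynomial.finset_sum_coeff, Finset.mul_sum]

lemma hadP_shift (A B : Polynomial R) (c : ℕ) :
    hadP (A * Polynomial.X ^ c) (B * Polynomial.X ^ c) = hadP A B * Polynomial.X ^ c := by
  ext n
  rw [Polynomial.coeff_mul_X_pow', hadP_coeff, Polynomial.coeff_mul_X_pow',
    Polynomial.coeff_mul_X_pow', hadP_coeff]
  split_ifs <;> simp

lemma hadP_zero_of (A B : Polynomial R) (h : ∀ n, A.coeff n = 0 ∨ B.coeff n = 0) :
    hadP A B = 0 := by
  ext n; rw [hadP_coeff]; rcases h n with h | h <;> simp [h]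

lemma hadP_natDegree_le (A B : Polynomial R) : (hadP A B).natDegree ≤ A.natDegree := by
  apply Polynomial.natDegree_le_iff_coeff_eq_zero.mpr
  intro N hN
  rw [hadP_coeff, Polynomial.coeff_eq_zero_of_natDegree_lt hN, zero_mul]

lemma hadP_low_highshift (A B : Polynomial R) (c : ℕ) (hA : A.natDegree < c) :
    hadP A (B * Polynomial.X ^ c) = 0 := by
  apply hadP_zero_of; intro n
  by_cases h : c ≤ n
  · exact Or.inl (Polynomial.coeff_eq_zero_of_natDegree_lt (lt_of_lt_of_le hA h))
  · right; rw [Polynomial.coeff_mul_X_pow']; simp [h]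

lemma hadP_highshift_low (A B : Polynomial R) (c : ℕ) (hB : B.natDegree < c) :
    hadP (A * Polynomial.X ^ c) B = 0 := by
  apply hadP_zero_of; intro n
  by_cases h : c ≤ n
  · exact Or.inr (Polynomial.coeff_eq_zero_of_natDegree_lt (lt_of_lt_of_le hB h))
  · left; rw [Polynomial.coeff_mul_X_pow']; simp [h]

lemma hadP_nested_zero (A B C : Polynomial R) (c c' : ℕ) (hC : C.natDegree < c + c') :
    hadP (hadP (A * Polynomial.X ^ c') B * Polynomial.X ^ c) C = 0 := by
  apply hadP_zero_of; intro n
  by_cases h1 : c + c' ≤ n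
  · exact Or.inr (Polynomial.coeff_eq_zero_of_natDegree_lt (lt_of_lt_of_le hC h1))
  · left
    rw [Polynomial.coeff_mul_X_pow']
    split_ifs with h2
    · rw [hadP_coeff, Polynomial.coeff_mul_X_pow']
      have h3 : ¬ c' ≤ n - c := by omega
      simp [h3]
    · rfl


lemma testBit_sum : ∀ (c m : ℕ), m < 2 ^ c →
    ∑ j ∈ Finset.range c, (if m.testBit j then 2 ^ j else 0) = m := by
  intro c
  induction c with
  | zero =>
    intro m h
    have : m = 0 := by simpa using h
    simp [this]
  | succ c ih =>
    intro m h
    rw [Finset.sum_range_succ']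
    have hpow : 2 ^ (c + 1) = 2 * 2 ^ c := by ring
    have h2 : m / 2 < 2 ^ c := by omega
    have e : ∀ j, (if m.testBit (j + 1) then 2 ^ (j + 1) else 0)
        = 2 * (if (m / 2).testBit j then 2 ^ j else 0) := by
      intro j; rw [Nat.testBit_add_one]; split_ifs <;> ring
    rw [Finset.sum_congr rfl (fun j _ => e j), ← Finset.mul_sum, ih (m / 2) h2,
      Nat.testBit_zero]
    rcases Nat.mod_two_eq_zero_or_one m with h0 | h0 <;> simp [h0] <;> omega

lemma genProd_eq (G : ℕ → Polynomial R) (m c : ℕ) (h : m < 2 ^ c) :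
    ∏ j ∈ Finset.range (m + 1), (if m.testBit j then G j else 1)
      = ∏ j ∈ Finset.range c, (if m.testBit j then G j else 1) := by
  have key : ∀ c₁ c₂ : ℕ, c₁ ≤ c₂ → m < 2 ^ c₁ →
      ∏ j ∈ Finset.range c₁, (if m.testBit j then G j else 1)
        = ∏ j ∈ Finset.range c₂, (if m.testBit j then G j else 1) := by
    intro c₁ c₂ hc hm
    apply Finset.prod_subset (Finset.range_subset_range.mpr hc)
    intro j hj hj'
    simp only [Finset.mem_range] at hj hj'
    have hb : m.testBit j = false :=
      Nat.testBit_lt_two_pow (lt_of_lt_of_le hm (Nat.pow_le_pow_right (by norm_num) (by omega)))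
    simp [hb]
  have hm1 : m < 2 ^ (m + 1) := lt_of_lt_of_le (Nat.lt_two_pow_self (n := m))
    (Nat.pow_le_pow_right (by norm_num) (by omega))
  rcases le_total (m + 1) c with hc | hc
  · exact key _ _ hc hm1
  · exact (key _ _ hc h).symm

lemma genProd_split (G : ℕ → Polynomial R) (t k : ℕ) (hk : k < 2 ^ t) :
    ∏ j ∈ Finset.range (2 ^ t + k + 1), (if (2 ^ t + k).testBit j then G j else 1)
      = G t * ∏ j ∈ Finset.range (k + 1), (if k.testBit j then G j else 1) := by
  have h1 : 2 ^ t + k < 2 ^ (t + 1) := by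
    have : 2 ^ (t + 1) = 2 ^ t + 2 ^ t := by ring
    omega
  rw [genProd_eq G _ (t + 1) h1, Finset.prod_range_succ]
  have hbt : (2 ^ t + k).testBit t = true := by
    rw [Nat.testBit_two_pow_add_eq, Nat.testBit_lt_two_pow hk]
    rfl
  have hlow : ∀ j ∈ Finset.range t,
      (if (2 ^ t + k).testBit j then G j else 1) = (if k.testBit j then G j else 1) := by
    intro j hj
    rw [Nat.testBit_two_pow_add_gt (Finset.mem_range.mp hj)]
  rw [Finset.prod_congr rfl hlow, hbt, if_pos rfl, genProd_eq G k t hk, mul_comm]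

lemma Sier_split (t k : ℕ) (hk : k < 2 ^ t) :
    Sier R (2 ^ t + k) = (1 + Polynomial.X ^ (2 ^ t)) * Sier R k :=
  genProd_split (fun j => 1 + Polynomial.X ^ (2 ^ j)) t k hk

lemma SierBar_split (t k : ℕ) (hk : k < 2 ^ t) :
    SierBar R (2 ^ t + k) = (1 - Polynomial.X ^ (2 ^ t)) * SierBar R k :=
  genProd_split (fun j => 1 - Polynomial.X ^ (2 ^ j)) t k hk

lemma natDegree_genProd_le (G : ℕ → Polynomial R) (hG : ∀ j, (G j).natDegree ≤ 2 ^ j)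
    (m : ℕ) : (∏ j ∈ Finset.range (m + 1), (if m.testBit j then G j else 1)).natDegree ≤ m := by
  refine le_trans (Polynomial.natDegree_prod_le _ _) ?_
  have hm1 : m < 2 ^ (m + 1) := lt_of_lt_of_le (Nat.lt_two_pow_self (n := m))
    (Nat.pow_le_pow_right (by norm_num) (by omega))
  calc ∑ j ∈ Finset.range (m + 1), (if m.testBit j then G j else 1).natDegree
      ≤ ∑ j ∈ Finset.range (m + 1), (if m.testBit j then 2 ^ j else 0) := by
        apply Finset.sum_le_sum
        intro j _
        split_ifs with h
        · exact hG j
        · simp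
    _ = m := testBit_sum (m + 1) m hm1

lemma natDegree_Sier_le (m : ℕ) : (Sier R m).natDegree ≤ m := by
  apply natDegree_genProd_le
  intro j
  exact le_trans (Polynomial.natDegree_add_le _ _)
    (by simp [Polynomial.natDegree_X_pow_le])

lemma natDegree_SierBar_le (m : ℕ) : (SierBar R m).natDegree ≤ m := by
  apply natDegree_genProd_le
  intro j
  exact le_trans (Polynomial.natDegree_sub_le _ _)
    (by simp [Polynomial.natDegree_X_pow_le])

lemma sgn_zero : sgn R 0 = 1 := by simp [sgn]

lemma Sier_zero : Sier R 0 = 1 := by simp [Sier]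

lemma SierBar_zero : SierBar R 0 = 1 := by simp [SierBar]

lemma sgn_rec (n : ℕ) (hn : n ≠ 0) : sgn R n = (-1) ^ (n % 2) * sgn R (n / 2) := by
  unfold sgn
  rw [Nat.digits_def' (by norm_num : (1:ℕ) < 2) (Nat.pos_of_ne_zero hn), List.sum_cons, pow_add]

lemma sgn_split (t k : ℕ) (hk : k < 2 ^ t) : sgn R (2 ^ t + k) = - sgn R k := by
  induction t generalizing k with
  | zero =>
    have h0 : k = 0 := by omega
    subst h0
    have e1 : 2 ^ 0 + 0 = 1 := rfl
    rw [e1, sgn_rec 1 one_ne_zero]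
    norm_num [sgn_zero]
  | succ t ih =>
    have hpow : 2 ^ (t + 1) = 2 * 2 ^ t := by ring
    have h1 : 2 ^ (t + 1) + k ≠ 0 := by positivity
    rw [sgn_rec _ h1]
    have h2 : (2 ^ (t + 1) + k) % 2 = k % 2 := by omega
    have h3 : (2 ^ (t + 1) + k) / 2 = 2 ^ t + k / 2 := by omega
    rw [h2, h3, ih (k / 2) (by omega)]
    by_cases hk0 : k = 0
    · subst hk0; simp [sgn_zero]
    · rw [sgn_rec k hk0]; ring

lemma hadP_highshift_low' (A B : Polynomial R) (k c : ℕ) (hB : B.natDegree < k + c) :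
    hadP ((A * Polynomial.X ^ k) * Polynomial.X ^ c) B = 0 := by
  rw [mul_assoc, ← pow_add]
  exact hadP_highshift_low A B (k + c) hB

lemma hadP_one_one : hadP (1 : Polynomial R) 1 = 1 := by
  ext n
  rw [hadP_coeff]
  by_cases h : n = 0 <;> simp [h, Polynomial.coeff_one]

lemma key (t : ℕ) : ∀ p q : ℕ, p < 2 ^ t → q < 2 ^ t →
    (Polynomial.X ^ (p + q) : Polynomial R) = ∑ k ∈ Finset.range (2 ^ t),
      sgn R k • (Sier R (2 ^ t - 1 - k) *
        hadP (hadP (Sier R (2 ^ t - 1 - k) * Polynomial.X ^ k)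
          (SierBar R k * Polynomial.X ^ p)) (SierBar R k * Polynomial.X ^ q)) := by
  induction t with
  | zero =>
    intro p q hp hq
    have hp0 : p = 0 := by simpa using Nat.lt_one_iff.mp (by simpa using hp)
    have hq0 : q = 0 := by simpa using Nat.lt_one_iff.mp (by simpa using hq)
    subst hp0; subst hq0
    norm_num [Finset.sum_range_one, sgn_zero, Sier_zero, SierBar_zero, hadP_one_one]
  | succ t ih =>
    intro p q hp hq
    set N : ℕ := 2 ^ t with hN
    have hN1 : 1 ≤ N := Nat.one_le_two_pow
    have h2 : 2 ^ (t + 1) = N + N := by rw [hN]; ring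
    rw [h2] at hp hq ⊢
    rw [Finset.sum_range_add]
    have SierS : ∀ m, m < N → Sier R (N + m) = (1 + Polynomial.X ^ N) * Sier R m := by
      intro m hm; rw [hN]; exact Sier_split t m (by rw [← hN]; exact hm)
    have SierBarS : ∀ m, m < N →
        SierBar R (N + m) = (1 - Polynomial.X ^ N) * SierBar R m := by
      intro m hm; rw [hN]; exact SierBar_split t m (by rw [← hN]; exact hm)
    have sgnS : ∀ m, m < N → sgn R (N + m) = - sgn R m := by
      intro m hm; rw [hN]; exact sgn_split t m (by rw [← hN]; exact hm)
    have hSel : ∀ k, k < N → (Sier R (N - 1 - k) * Polynomial.X ^ k).natDegree ≤ N - 1 := by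
      intro k hk
      refine le_trans (Polynomial.natDegree_mul_le) ?_
      have h1 := natDegree_Sier_le (R := R) (N - 1 - k)
      have h2 := Polynomial.natDegree_X_pow_le (R := R) k
      omega
    have hSB : ∀ k c : ℕ, (SierBar R k * Polynomial.X ^ c).natDegree ≤ k + c := by
      intro k c
      refine le_trans (Polynomial.natDegree_mul_le) ?_
      have h1 := natDegree_SierBar_le (R := R) k
      have h2 := Polynomial.natDegree_X_pow_le (R := R) c
      omega
    rcases Nat.lt_or_ge p N with hpl | hph
    · rcases Nat.lt_or_ge q N with hql | hqh
      · -- case LL : p < N, q < N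
        have e1 : ∀ k ∈ Finset.range N,
            sgn R k • (Sier R (N + N - 1 - k) *
              hadP (hadP (Sier R (N + N - 1 - k) * Polynomial.X ^ k)
                (SierBar R k * Polynomial.X ^ p)) (SierBar R k * Polynomial.X ^ q))
            = (1 + Polynomial.X ^ N) * (sgn R k • (Sier R (N - 1 - k) *
                hadP (hadP (Sier R (N - 1 - k) * Polynomial.X ^ k)
                  (SierBar R k * Polynomial.X ^ p)) (SierBar R k * Polynomial.X ^ q))) := by
          intro k hk
          have hkN : k < N := Finset.mem_range.mp hk
          have hidx : N + N - 1 - k = N + (N - 1 - k) := by omega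
          rw [hidx, SierS _ (by omega)]
          have eSel : (1 + Polynomial.X ^ N) * Sier R (N - 1 - k) * Polynomial.X ^ k
              = Sier R (N - 1 - k) * Polynomial.X ^ k
                + Sier R (N - 1 - k) * Polynomial.X ^ (k + N) := by ring
          rw [eSel, hadP_add_left,
            hadP_highshift_low (Sier R (N - 1 - k)) (SierBar R k * Polynomial.X ^ p) (k + N)
              (lt_of_le_of_lt (hSB k p) (by omega)), add_zero]
          simp only [smul_mul_assoc, mul_smul_comm, mul_assoc]
        have e2 : ∀ k ∈ Finset.range N,
            sgn R (N + k) • (Sier R (N + N - 1 - (N + k)) *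
              hadP (hadP (Sier R (N + N - 1 - (N + k)) * Polynomial.X ^ (N + k))
                (SierBar R (N + k) * Polynomial.X ^ p))
                (SierBar R (N + k) * Polynomial.X ^ q))
            = -(sgn R k • (Sier R (N - 1 - k) *
                hadP (hadP (Sier R (N - 1 - k) * Polynomial.X ^ k)
                  (SierBar R k * Polynomial.X ^ p)) (SierBar R k * Polynomial.X ^ q))
                * Polynomial.X ^ N) := by
          intro k hk
          have hkN : k < N := Finset.mem_range.mp hk
          have hidx : N + N - 1 - (N + k) = N - 1 - k := by omega
          rw [hidx, sgnS _ hkN, SierBarS _ hkN]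
          have eSel2 : Sier R (N - 1 - k) * Polynomial.X ^ (N + k)
              = (Sier R (N - 1 - k) * Polynomial.X ^ k) * Polynomial.X ^ N := by ring
          have eB : (1 - Polynomial.X ^ N) * SierBar R k * Polynomial.X ^ p
              = SierBar R k * Polynomial.X ^ p
                - (SierBar R k * Polynomial.X ^ p) * Polynomial.X ^ N := by ring
          have eC : (1 - Polynomial.X ^ N) * SierBar R k * Polynomial.X ^ q
              = SierBar R k * Polynomial.X ^ q
                - (SierBar R k * Polynomial.X ^ q) * Polynomial.X ^ N := by ring
          have hinner : hadP ((Sier R (N - 1 - k) * Polynomial.X ^ k) * Polynomial.X ^ N)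
              (SierBar R k * Polynomial.X ^ p
                - (SierBar R k * Polynomial.X ^ p) * Polynomial.X ^ N)
              = -(hadP (Sier R (N - 1 - k) * Polynomial.X ^ k)
                  (SierBar R k * Polynomial.X ^ p) * Polynomial.X ^ N) := by
            rw [hadP_sub_right,
              hadP_highshift_low' (Sier R (N - 1 - k)) (SierBar R k * Polynomial.X ^ p) k N
                (lt_of_le_of_lt (hSB k p) (by omega)),
              hadP_shift, zero_sub]
          rw [eSel2, eB, eC, hinner, hadP_neg_left, hadP_sub_right,
            hadP_nested_zero (Sier R (N - 1 - k)) (SierBar R k * Polynomial.X ^ p)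
              (SierBar R k * Polynomial.X ^ q) N k
              (lt_of_le_of_lt (hSB k q) (by omega)),
            hadP_shift, zero_sub, neg_neg]
          simp only [smul_mul_assoc, mul_smul_comm, neg_smul, smul_neg, mul_neg, neg_neg,
            mul_assoc]
        rw [Finset.sum_congr rfl e1, Finset.sum_congr rfl e2, ← Finset.mul_sum,
          Finset.sum_neg_distrib, ← Finset.sum_mul, ← ih p q hpl hql]
        ring
      · -- case LH : p < N, q = N + q'
        obtain ⟨q', rfl⟩ : ∃ q', q = N + q' := ⟨q - N, by omega⟩
        have hq' : q' < N := by omega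
        have e1 : ∀ k ∈ Finset.range N,
            sgn R k • (Sier R (N + N - 1 - k) *
              hadP (hadP (Sier R (N + N - 1 - k) * Polynomial.X ^ k)
                (SierBar R k * Polynomial.X ^ p))
                (SierBar R k * Polynomial.X ^ (N + q')))
            = 0 := by
          intro k hk
          have hkN : k < N := Finset.mem_range.mp hk
          have hidx : N + N - 1 - k = N + (N - 1 - k) := by omega
          rw [hidx, SierS _ (by omega)]
          have eSel : (1 + Polynomial.X ^ N) * Sier R (N - 1 - k) * Polynomial.X ^ k
              = Sier R (N - 1 - k) * Polynomial.X ^ k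
                + Sier R (N - 1 - k) * Polynomial.X ^ (k + N) := by ring
          have eQ : SierBar R k * Polynomial.X ^ (N + q')
              = (SierBar R k * Polynomial.X ^ q') * Polynomial.X ^ N := by ring
          rw [eSel, eQ, hadP_add_left,
            hadP_highshift_low (Sier R (N - 1 - k)) (SierBar R k * Polynomial.X ^ p) (k + N)
              (lt_of_le_of_lt (hSB k p) (by omega)), add_zero,
            hadP_low_highshift _ (SierBar R k * Polynomial.X ^ q') N
              (lt_of_le_of_lt (le_trans (hadP_natDegree_le _ _) (hSel k hkN)) (by omega))]
          simp
        have e2 : ∀ k ∈ Finset.range N,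
            sgn R (N + k) • (Sier R (N + N - 1 - (N + k)) *
              hadP (hadP (Sier R (N + N - 1 - (N + k)) * Polynomial.X ^ (N + k))
                (SierBar R (N + k) * Polynomial.X ^ p))
                (SierBar R (N + k) * Polynomial.X ^ (N + q')))
            = sgn R k • (Sier R (N - 1 - k) *
                hadP (hadP (Sier R (N - 1 - k) * Polynomial.X ^ k)
                  (SierBar R k * Polynomial.X ^ p)) (SierBar R k * Polynomial.X ^ q'))
                * Polynomial.X ^ N := by
          intro k hk
          have hkN : k < N := Finset.mem_range.mp hk
          have hidx : N + N - 1 - (N + k) = N - 1 - k := by omega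
          rw [hidx, sgnS _ hkN, SierBarS _ hkN]
          have eSel2 : Sier R (N - 1 - k) * Polynomial.X ^ (N + k)
              = (Sier R (N - 1 - k) * Polynomial.X ^ k) * Polynomial.X ^ N := by ring
          have eB : (1 - Polynomial.X ^ N) * SierBar R k * Polynomial.X ^ p
              = SierBar R k * Polynomial.X ^ p
                - (SierBar R k * Polynomial.X ^ p) * Polynomial.X ^ N := by ring
          have eC : (1 - Polynomial.X ^ N) * SierBar R k * Polynomial.X ^ (N + q')
              = (SierBar R k * Polynomial.X ^ q') * Polynomial.X ^ N
                - (SierBar R k * Polynomial.X ^ q') * Polynomial.X ^ (N + N) := by ring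
          have hinner : hadP ((Sier R (N - 1 - k) * Polynomial.X ^ k) * Polynomial.X ^ N)
              (SierBar R k * Polynomial.X ^ p
                - (SierBar R k * Polynomial.X ^ p) * Polynomial.X ^ N)
              = -(hadP (Sier R (N - 1 - k) * Polynomial.X ^ k)
                  (SierBar R k * Polynomial.X ^ p) * Polynomial.X ^ N) := by
            rw [hadP_sub_right,
              hadP_highshift_low' (Sier R (N - 1 - k)) (SierBar R k * Polynomial.X ^ p) k N
                (lt_of_le_of_lt (hSB k p) (by omega)),
              hadP_shift, zero_sub]
          rw [eSel2, eB, eC, hinner, hadP_neg_left, hadP_sub_right, hadP_shift,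
            hadP_low_highshift
              (hadP (Sier R (N - 1 - k) * Polynomial.X ^ k)
                (SierBar R k * Polynomial.X ^ p) * Polynomial.X ^ N)
              (SierBar R k * Polynomial.X ^ q') (N + N)
              (lt_of_le_of_lt (le_trans Polynomial.natDegree_mul_le
                (add_le_add (le_trans (hadP_natDegree_le _ _) (hSel k hkN))
                  (Polynomial.natDegree_X_pow_le N))) (by omega)),
            sub_zero]
          simp only [smul_mul_assoc, mul_smul_comm, neg_smul, smul_neg, mul_neg, neg_neg,
            mul_assoc]
        rw [Finset.sum_congr rfl e1, Finset.sum_congr rfl e2, Finset.sum_const_zero,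
          ← Finset.sum_mul, ← ih p q' hpl hq']
        ring
    · -- p = N + p'
      obtain ⟨p', rfl⟩ : ∃ p', p = N + p' := ⟨p - N, by omega⟩
      have hp' : p' < N := by omega
      rcases Nat.lt_or_ge q N with hql | hqh
      · -- case HL : p = N + p', q < N
        have e1 : ∀ k ∈ Finset.range N,
            sgn R k • (Sier R (N + N - 1 - k) *
              hadP (hadP (Sier R (N + N - 1 - k) * Polynomial.X ^ k)
                (SierBar R k * Polynomial.X ^ (N + p')))
                (SierBar R k * Polynomial.X ^ q))
            = 0 := by
          intro k hk
          have hkN : k < N := Finset.mem_range.mp hk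
          have hidx : N + N - 1 - k = N + (N - 1 - k) := by omega
          rw [hidx, SierS _ (by omega)]
          have eSel : (1 + Polynomial.X ^ N) * Sier R (N - 1 - k) * Polynomial.X ^ k
              = Sier R (N - 1 - k) * Polynomial.X ^ k
                + (Sier R (N - 1 - k) * Polynomial.X ^ k) * Polynomial.X ^ N := by ring
          have eP : SierBar R k * Polynomial.X ^ (N + p')
              = (SierBar R k * Polynomial.X ^ p') * Polynomial.X ^ N := by ring
          rw [eSel, eP, hadP_add_left,
            hadP_low_highshift (Sier R (N - 1 - k) * Polynomial.X ^ k)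
              (SierBar R k * Polynomial.X ^ p') N
              (lt_of_le_of_lt (hSel k hkN) (by omega)),
            hadP_shift, zero_add,
            hadP_nested_zero (Sier R (N - 1 - k)) (SierBar R k * Polynomial.X ^ p')
              (SierBar R k * Polynomial.X ^ q) N k
              (lt_of_le_of_lt (hSB k q) (by omega))]
          simp
        have e2 : ∀ k ∈ Finset.range N,
            sgn R (N + k) • (Sier R (N + N - 1 - (N + k)) *
              hadP (hadP (Sier R (N + N - 1 - (N + k)) * Polynomial.X ^ (N + k))
                (SierBar R (N + k) * Polynomial.X ^ (N + p')))
                (SierBar R (N + k) * Polynomial.X ^ q))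
            = sgn R k • (Sier R (N - 1 - k) *
                hadP (hadP (Sier R (N - 1 - k) * Polynomial.X ^ k)
                  (SierBar R k * Polynomial.X ^ p')) (SierBar R k * Polynomial.X ^ q))
                * Polynomial.X ^ N := by
          intro k hk
          have hkN : k < N := Finset.mem_range.mp hk
          have hidx : N + N - 1 - (N + k) = N - 1 - k := by omega
          rw [hidx, sgnS _ hkN, SierBarS _ hkN]
          have eSel2 : Sier R (N - 1 - k) * Polynomial.X ^ (N + k)
              = (Sier R (N - 1 - k) * Polynomial.X ^ k) * Polynomial.X ^ N := by ring
          have eBp : (1 - Polynomial.X ^ N) * SierBar R k * Polynomial.X ^ (N + p')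
              = (SierBar R k * Polynomial.X ^ p') * Polynomial.X ^ N
                - (SierBar R k * Polynomial.X ^ p') * Polynomial.X ^ (N + N) := by ring
          have eC : (1 - Polynomial.X ^ N) * SierBar R k * Polynomial.X ^ q
              = SierBar R k * Polynomial.X ^ q
                - (SierBar R k * Polynomial.X ^ q) * Polynomial.X ^ N := by ring
          have hinner2 : hadP ((Sier R (N - 1 - k) * Polynomial.X ^ k) * Polynomial.X ^ N)
              ((SierBar R k * Polynomial.X ^ p') * Polynomial.X ^ N
                - (SierBar R k * Polynomial.X ^ p') * Polynomial.X ^ (N + N))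
              = hadP (Sier R (N - 1 - k) * Polynomial.X ^ k)
                  (SierBar R k * Polynomial.X ^ p') * Polynomial.X ^ N := by
            rw [hadP_sub_right, hadP_shift,
              hadP_low_highshift ((Sier R (N - 1 - k) * Polynomial.X ^ k) * Polynomial.X ^ N)
                (SierBar R k * Polynomial.X ^ p') (N + N)
                (lt_of_le_of_lt (le_trans Polynomial.natDegree_mul_le
                  (add_le_add (hSel k hkN) (Polynomial.natDegree_X_pow_le N))) (by omega)),
              sub_zero]
          rw [eSel2, eBp, eC, hinner2, hadP_sub_right,
            hadP_nested_zero (Sier R (N - 1 - k)) (SierBar R k * Polynomial.X ^ p')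
              (SierBar R k * Polynomial.X ^ q) N k
              (lt_of_le_of_lt (hSB k q) (by omega)),
            hadP_shift, zero_sub]
          simp only [smul_mul_assoc, mul_smul_comm, neg_smul, smul_neg, mul_neg, neg_neg,
            mul_assoc]
        rw [Finset.sum_congr rfl e1, Finset.sum_congr rfl e2, Finset.sum_const_zero,
          ← Finset.sum_mul, ← ih p' q hp' hql]
        ring
      · -- case HH : p = N + p', q = N + q'
        obtain ⟨q', rfl⟩ : ∃ q', q = N + q' := ⟨q - N, by omega⟩
        have hq' : q' < N := by omega
        have e1 : ∀ k ∈ Finset.range N,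
            sgn R k • (Sier R (N + N - 1 - k) *
              hadP (hadP (Sier R (N + N - 1 - k) * Polynomial.X ^ k)
                (SierBar R k * Polynomial.X ^ (N + p')))
                (SierBar R k * Polynomial.X ^ (N + q')))
            = (1 + Polynomial.X ^ N) * (sgn R k • (Sier R (N - 1 - k) *
                hadP (hadP (Sier R (N - 1 - k) * Polynomial.X ^ k)
                  (SierBar R k * Polynomial.X ^ p')) (SierBar R k * Polynomial.X ^ q')))
                * Polynomial.X ^ N := by
          intro k hk
          have hkN : k < N := Finset.mem_range.mp hk
          have hidx : N + N - 1 - k = N + (N - 1 - k) := by omega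
          rw [hidx, SierS _ (by omega)]
          have eSel : (1 + Polynomial.X ^ N) * Sier R (N - 1 - k) * Polynomial.X ^ k
              = Sier R (N - 1 - k) * Polynomial.X ^ k
                + (Sier R (N - 1 - k) * Polynomial.X ^ k) * Polynomial.X ^ N := by ring
          have eP : SierBar R k * Polynomial.X ^ (N + p')
              = (SierBar R k * Polynomial.X ^ p') * Polynomial.X ^ N := by ring
          have eQ : SierBar R k * Polynomial.X ^ (N + q')
              = (SierBar R k * Polynomial.X ^ q') * Polynomial.X ^ N := by ring
          rw [eSel, eP, eQ, hadP_add_left,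
            hadP_low_highshift (Sier R (N - 1 - k) * Polynomial.X ^ k)
              (SierBar R k * Polynomial.X ^ p') N
              (lt_of_le_of_lt (hSel k hkN) (by omega)),
            hadP_shift, zero_add, hadP_shift]
          simp only [smul_mul_assoc, mul_smul_comm, mul_assoc]
        have e2 : ∀ k ∈ Finset.range N,
            sgn R (N + k) • (Sier R (N + N - 1 - (N + k)) *
              hadP (hadP (Sier R (N + N - 1 - (N + k)) * Polynomial.X ^ (N + k))
                (SierBar R (N + k) * Polynomial.X ^ (N + p')))
                (SierBar R (N + k) * Polynomial.X ^ (N + q')))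
            = -(sgn R k • (Sier R (N - 1 - k) *
                hadP (hadP (Sier R (N - 1 - k) * Polynomial.X ^ k)
                  (SierBar R k * Polynomial.X ^ p')) (SierBar R k * Polynomial.X ^ q'))
                * Polynomial.X ^ N) := by
          intro k hk
          have hkN : k < N := Finset.mem_range.mp hk
          have hidx : N + N - 1 - (N + k) = N - 1 - k := by omega
          rw [hidx, sgnS _ hkN, SierBarS _ hkN]
          have eSel2 : Sier R (N - 1 - k) * Polynomial.X ^ (N + k)
              = (Sier R (N - 1 - k) * Polynomial.X ^ k) * Polynomial.X ^ N := by ring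
          have eBp : (1 - Polynomial.X ^ N) * SierBar R k * Polynomial.X ^ (N + p')
              = (SierBar R k * Polynomial.X ^ p') * Polynomial.X ^ N
                - (SierBar R k * Polynomial.X ^ p') * Polynomial.X ^ (N + N) := by ring
          have eCq : (1 - Polynomial.X ^ N) * SierBar R k * Polynomial.X ^ (N + q')
              = (SierBar R k * Polynomial.X ^ q') * Polynomial.X ^ N
                - (SierBar R k * Polynomial.X ^ q') * Polynomial.X ^ (N + N) := by ring
          have hinner2 : hadP ((Sier R (N - 1 - k) * Polynomial.X ^ k) * Polynomial.X ^ N)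
              ((SierBar R k * Polynomial.X ^ p') * Polynomial.X ^ N
                - (SierBar R k * Polynomial.X ^ p') * Polynomial.X ^ (N + N))
              = hadP (Sier R (N - 1 - k) * Polynomial.X ^ k)
                  (SierBar R k * Polynomial.X ^ p') * Polynomial.X ^ N := by
            rw [hadP_sub_right, hadP_shift,
              hadP_low_highshift ((Sier R (N - 1 - k) * Polynomial.X ^ k) * Polynomial.X ^ N)
                (SierBar R k * Polynomial.X ^ p') (N + N)
                (lt_of_le_of_lt (le_trans Polynomial.natDegree_mul_le
                  (add_le_add (hSel k hkN) (Polynomial.natDegree_X_pow_le N))) (by omega)),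
              sub_zero]
          rw [eSel2, eBp, eCq, hinner2, hadP_sub_right, hadP_shift,
            hadP_low_highshift
              (hadP (Sier R (N - 1 - k) * Polynomial.X ^ k)
                (SierBar R k * Polynomial.X ^ p') * Polynomial.X ^ N)
              (SierBar R k * Polynomial.X ^ q') (N + N)
              (lt_of_le_of_lt (le_trans Polynomial.natDegree_mul_le
                (add_le_add (le_trans (hadP_natDegree_le _ _) (hSel k hkN))
                  (Polynomial.natDegree_X_pow_le N))) (by omega)),
            sub_zero]
          simp only [smul_mul_assoc, mul_smul_comm, neg_smul, smul_neg, mul_neg, neg_neg,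
            mul_assoc]
        rw [Finset.sum_congr rfl e1, Finset.sum_congr rfl e2, Finset.sum_neg_distrib,
          ← Finset.sum_mul, ← Finset.sum_mul, ← Finset.mul_sum, ← ih p' q' hp' hq']
        ring


end Aux

/-- For n a power of 2 and polynomials f, g of degree < n,
f * g = Σ_{k=0}^{n-1} σ k * S (n-1-k) * ((S (n-1-k) * x^k) ⊙ (SBar k * f) ⊙ (SBar k * g)). -/
theorem convolution_formula_sierbar (R : Type*) [CommRing R] (n : ℕ)
    (hn : ∃ t : ℕ, n = 2 ^ t) (f g : Polynomial R)
    (hf : f.degree < n) (hg : g.degree < n) :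
    f * g = ∑ k ∈ Finset.range n,
      sgn R k • (Sier R (n - 1 - k) *
        hadP (hadP (Sier R (n - 1 - k) * Polynomial.X ^ k) (SierBar R k * f))
          (SierBar R k * g)) := by
  obtain ⟨t, rfl⟩ := hn
  set n : ℕ := 2 ^ t with hn
  have hn1 : 0 < n := Nat.pow_pos (by norm_num)
  have hfd : f.natDegree < n := by
    rcases eq_or_ne f 0 with rfl | h0
    · simpa using hn1
    · exact (Polynomial.natDegree_lt_iff_degree_lt h0).mpr hf
  have hgd : g.natDegree < n := by
    rcases eq_or_ne g 0 with rfl | h0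
    · simpa using hn1
    · exact (Polynomial.natDegree_lt_iff_degree_lt h0).mpr hg
  have key' := key (R := R) t
  rw [← hn] at key'
  -- the per-(p,q,k) summand
  set E : ℕ → ℕ → ℕ → Polynomial R := fun p q k =>
    Polynomial.C (f.coeff p) * (Polynomial.C (g.coeff q) *
      (sgn R k • (Sier R (n - 1 - k) *
        hadP (hadP (Sier R (n - 1 - k) * Polynomial.X ^ k)
          (SierBar R k * Polynomial.X ^ p)) (SierBar R k * Polynomial.X ^ q)))) with hE
  have eL : ∀ p ∈ Finset.range n, ∀ q ∈ Finset.range n,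
      (Polynomial.monomial p (f.coeff p) : Polynomial R) * Polynomial.monomial q (g.coeff q)
        = ∑ k ∈ Finset.range n, E p q k := by
    intro p hp q hq
    have hk := key' p q (Finset.mem_range.mp hp) (Finset.mem_range.mp hq)
    calc (Polynomial.monomial p (f.coeff p) : Polynomial R) * Polynomial.monomial q (g.coeff q)
        = Polynomial.C (f.coeff p) * (Polynomial.C (g.coeff q)
            * Polynomial.X ^ (p + q)) := by
          rw [← Polynomial.C_mul_X_pow_eq_monomial, ← Polynomial.C_mul_X_pow_eq_monomial]
          ring
      _ = ∑ k ∈ Finset.range n, E p q k := by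
          rw [hk, Finset.mul_sum, Finset.mul_sum]
  have e : ∀ k ∈ Finset.range n,
      sgn R k • (Sier R (n - 1 - k) *
        hadP (hadP (Sier R (n - 1 - k) * Polynomial.X ^ k)
          (SierBar R k * ∑ p ∈ Finset.range n, Polynomial.monomial p (f.coeff p)))
          (SierBar R k * ∑ q ∈ Finset.range n, Polynomial.monomial q (g.coeff q)))
        = ∑ p ∈ Finset.range n, ∑ q ∈ Finset.range n, E p q k := by
    intro k hk
    have em : ∀ (m : ℕ) (a : R),
        SierBar R k * (Polynomial.monomial m a)
          = Polynomial.C a * (SierBar R k * Polynomial.X ^ m) := by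
      intro m a; rw [← Polynomial.C_mul_X_pow_eq_monomial]; ring
    simp only [hE, Finset.mul_sum, em, hadP_sum_right, hadP_C_mul_right, hadP_sum_left,
      hadP_C_mul_left, Finset.smul_sum, Polynomial.smul_eq_C_mul]
    rw [Finset.sum_comm]
    refine Finset.sum_congr rfl fun p _ => Finset.sum_congr rfl fun q _ => by ring
  conv_lhs => rw [Polynomial.as_sum_range' f n hfd, Polynomial.as_sum_range' g n hgd]
  conv_rhs =>
    rw [show (fun k => sgn R k • (Sier R (n - 1 - k) *
        hadP (hadP (Sier R (n - 1 - k) * Polynomial.X ^ k) (SierBar R k * f))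
          (SierBar R k * g))) = fun k => sgn R k • (Sier R (n - 1 - k) *
        hadP (hadP (Sier R (n - 1 - k) * Polynomial.X ^ k)
          (SierBar R k * ∑ p ∈ Finset.range n, Polynomial.monomial p (f.coeff p)))
          (SierBar R k * ∑ q ∈ Finset.range n, Polynomial.monomial q (g.coeff q)))
      from by
        funext k
        rw [← Polynomial.as_sum_range' f n hfd, ← Polynomial.as_sum_range' g n hgd]]
  calc (∑ p ∈ Finset.range n, Polynomial.monomial p (f.coeff p))
        * ∑ q ∈ Finset.range n, Polynomial.monomial q (g.coeff q)
      = ∑ p ∈ Finset.range n, ∑ q ∈ Finset.range n,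
          (Polynomial.monomial p (f.coeff p) : Polynomial R)
            * Polynomial.monomial q (g.coeff q) := Finset.sum_mul_sum _ _ _ _
    _ = ∑ p ∈ Finset.range n, ∑ q ∈ Finset.range n, ∑ k ∈ Finset.range n, E p q k :=
        Finset.sum_congr rfl fun p hp => Finset.sum_congr rfl fun q hq => eL p hp q hq
    _ = ∑ p ∈ Finset.range n, ∑ k ∈ Finset.range n, ∑ q ∈ Finset.range n, E p q k :=
        Finset.sum_congr rfl fun p _ => Finset.sum_comm
    _ = ∑ k ∈ Finset.range n, ∑ p ∈ Finset.range n, ∑ q ∈ Finset.range n, E p q k :=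
        Finset.sum_comm
    _ = _ := (Finset.sum_congr rfl e).symm
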